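/- Let 0 < α ≤ 1, let μ be a Borel probability measure on ℝ which is uniformly α-Hölder continuous, let (a_n)_{n ∈ ℕ} be nonzero reals, let (σ_n)_{n ∈ ℕ} be Borel probability measures on ℝ, and let (ν_n)_{n ∈ ℕ} be Borel probability measures on ℝ such that for each n, every E ∈ ℝ and every a > 0, Im F_{ν_n}(E + ia) = Im(∫_ℝ 1/(a_n·x + F_{σ_n}(E + ia)⁻¹) dμ(x)). Then each ν_n is uniformly α-Hölder continuous with d_{ν_n}^{α,∞} ≤ 2^{2−α}·π·|a_n|^{−α}·d_μ^{α,∞}; moreover, if β_n > 0 satisfy Σ_n β_n = 1 and Σ_n β_n |a_n|^{−α} < ∞, then ν = Σ_n β_n ν_n is uniformly α-Hölder continuous with d_ν^{α,∞} ≤ 2^{2−α}·π·d_μ^{α,∞}·Σ_n β_n |a_n|^{−α}. -/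

import Mathlib

open MeasureTheory Complex Set

/-- The Borel transform of a measure `σ` on `ℝ`: `F_σ(z) = ∫ 1/(x - z) dσ(x)`. -/
noncomputable def borelTransform (σ : Measure ℝ) (z : ℂ) : ℂ :=
  ∫ x : ℝ, ((x : ℂ) - z)⁻¹ ∂σ

/-- `d_μ^{α,∞} = sup_{x ∈ ℝ} sup_{ε > 0} μ((x−ε, x+ε))/(2ε)^α`. -/
noncomputable def dAlpha (μ : Measure ℝ) (α : ℝ) : ENNReal :=
  ⨆ (x : ℝ) (ε : ℝ) (_ : 0 < ε),
    μ (Set.Ioo (x - ε) (x + ε)) / ENNReal.ofReal ((2 * ε) ^ α)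

lemma norm_inv_sub_le (z : ℂ) (hz : z.im ≠ 0) (x : ℝ) :
    ‖((x : ℂ) - z)⁻¹‖ ≤ |z.im|⁻¹ := by
  rw [norm_inv]
  apply inv_anti₀ (abs_pos.2 hz)
  calc |z.im| = |((x:ℂ) - z).im| := by simp
  _ ≤ ‖(x:ℂ) - z‖ := Complex.abs_im_le_norm _

lemma cont_inv_sub (z : ℂ) (hz : z.im ≠ 0) :
    Continuous (fun x : ℝ => ((x : ℂ) - z)⁻¹) := by
  apply Continuous.inv₀ (by continuity)
  intro x h
  apply hz
  have := congrArg Complex.im h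
  simpa using this.symm

lemma integrable_inv_sub (ρ : Measure ℝ) [IsFiniteMeasure ρ] (z : ℂ) (hz : z.im ≠ 0) :
    Integrable (fun x : ℝ => ((x : ℂ) - z)⁻¹) ρ :=
  MemLp.integrable le_rfl <| MemLp.of_bound ((cont_inv_sub z hz).aestronglyMeasurable) _
    (Filter.Eventually.of_forall (norm_inv_sub_le z hz))

lemma im_inv_affine (c : ℝ) (w : ℂ) (x : ℝ) :
    (((c : ℂ) * x + w)⁻¹).im = -w.im / ((c * x + w.re) ^ 2 + w.im ^ 2) := by
  rw [Complex.inv_im, Complex.normSq_apply]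
  simp [pow_two]

lemma integrable_inv_affine (ρ : Measure ℝ) [IsFiniteMeasure ρ] (c : ℝ) (w : ℂ)
    (hw : w.im ≠ 0) : Integrable (fun x : ℝ => ((c : ℂ) * x + w)⁻¹) ρ := by
  have hc : Continuous (fun x : ℝ => ((c : ℂ) * x + w)⁻¹) := by
    apply Continuous.inv₀ (by continuity)
    intro x h
    apply hw
    have := congrArg Complex.im h
    simpa using this
  refine MemLp.integrable le_rfl <| MemLp.of_bound hc.aestronglyMeasurable (|w.im|⁻¹)
    (Filter.Eventually.of_forall fun x => ?_)
  rw [norm_inv]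
  apply inv_anti₀ (abs_pos.2 hw)
  calc |w.im| = |((c:ℂ)*x + w).im| := by simp
  _ ≤ ‖(c:ℂ)*x + w‖ := Complex.abs_im_le_norm _

lemma im_integral_inv_affine (ρ : Measure ℝ) [IsFiniteMeasure ρ] (c : ℝ) (w : ℂ)
    (hw : w.im ≠ 0) :
    (∫ x : ℝ, ((c : ℂ) * x + w)⁻¹ ∂ρ).im
      = ∫ x : ℝ, -w.im / ((c * x + w.re) ^ 2 + w.im ^ 2) ∂ρ := by
  have := (Complex.imCLM.integral_comp_comm (integrable_inv_affine ρ c w hw)).symm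
  simp only [Complex.imCLM_apply] at this
  rw [this]
  exact integral_congr_ae (Filter.Eventually.of_forall fun x => im_inv_affine c w x)

lemma borelTransform_im (ρ : Measure ℝ) [IsFiniteMeasure ρ] (E t : ℝ) (ht : 0 < t) :
    (borelTransform ρ ((E : ℂ) + (t : ℂ) * Complex.I)).im
      = ∫ x : ℝ, t / ((x - E) ^ 2 + t ^ 2) ∂ρ := by
  have h1 : ∀ x : ℝ, ((x : ℂ) - ((E : ℂ) + (t : ℂ) * Complex.I))
      = ((1 : ℝ) : ℂ) * x + (-((E : ℂ) + (t : ℂ) * Complex.I)) := by intro x; push_cast; ring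
  have him : (-((E : ℂ) + (t : ℂ) * Complex.I)).im = -t := by simp
  have hre : (-((E : ℂ) + (t : ℂ) * Complex.I)).re = -E := by simp
  rw [borelTransform]
  rw [integral_congr_ae (Filter.Eventually.of_forall fun x => by rw [h1 x])]
  rw [im_integral_inv_affine ρ 1 _ (by rw [him]; exact neg_ne_zero.2 ht.ne')]
  rw [him, hre]
  congr 1 with x
  ring_nf

lemma integrable_kernel (ρ : Measure ℝ) [IsFiniteMeasure ρ] (p c u v : ℝ) (hv : 0 < v) :
    Integrable (fun x : ℝ => p / ((c * x + u) ^ 2 + v ^ 2)) ρ := by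
  have hden : ∀ x : ℝ, (0:ℝ) < (c * x + u) ^ 2 + v ^ 2 := fun x =>
    add_pos_of_nonneg_of_pos (sq_nonneg _) (by positivity)
  have hc : Continuous (fun x : ℝ => p / ((c * x + u) ^ 2 + v ^ 2)) := by
    apply Continuous.div (by continuity) (by continuity)
    exact fun x => (hden x).ne'
  refine MemLp.integrable le_rfl <| MemLp.of_bound hc.aestronglyMeasurable (|p| / v ^ 2)
    (Filter.Eventually.of_forall fun x => ?_)
  rw [Real.norm_eq_abs, abs_div, abs_of_pos (hden x)]
  apply div_le_div_of_nonneg_left (abs_nonneg p) (by positivity)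
  linarith [sq_nonneg (c * x + u)]

lemma poisson_lower (ρ : Measure ℝ) [IsProbabilityMeasure ρ] (E ε : ℝ) (hε : 0 < ε) :
    (ρ (Set.Ioo (E - ε) (E + ε))).toReal / (2 * ε)
      ≤ ∫ x : ℝ, ε / ((x - E) ^ 2 + ε ^ 2) ∂ρ := by
  have hint : Integrable (fun x : ℝ => ε / ((x - E) ^ 2 + ε ^ 2)) ρ := by
    have := integrable_kernel ρ ε 1 (-E) ε hε
    simpa [sub_eq_add_neg] using this
  have hnn : 0 ≤ᵐ[ρ] fun x : ℝ => ε / ((x - E) ^ 2 + ε ^ 2) :=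
    Filter.Eventually.of_forall fun x => by positivity
  calc (ρ (Set.Ioo (E - ε) (E + ε))).toReal / (2 * ε)
      = (1 / (2 * ε)) * (ρ (Set.Ioo (E - ε) (E + ε))).toReal := by ring
    _ ≤ ∫ x in Set.Ioo (E - ε) (E + ε), ε / ((x - E) ^ 2 + ε ^ 2) ∂ρ := by
        apply setIntegral_ge_of_const_le_real measurableSet_Ioo (measure_ne_top ρ _)
        · intro x hx
          rw [div_le_div_iff₀ (by positivity) (add_pos_of_nonneg_of_pos (sq_nonneg _) (by positivity))]
          have h1 : |x - E| < ε := by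
            rw [abs_lt]; constructor <;> [linarith [hx.1]; linarith [hx.2]]
          have h2 : (x - E) ^ 2 < ε ^ 2 := by
            have := sq_lt_sq' (by linarith [hx.1] : -ε < x - E) (by linarith [hx.2])
            simpa using this
          nlinarith
        · exact hint.integrableOn
    _ ≤ ∫ x : ℝ, ε / ((x - E) ^ 2 + ε ^ 2) ∂ρ := setIntegral_le_integral hint hnn

lemma sq_abs_borel_le (ρ : Measure ℝ) [IsProbabilityMeasure ρ] (E t : ℝ) (ht : 0 < t) :
    t * ‖borelTransform ρ ((E : ℂ) + (t : ℂ) * Complex.I)‖ ^ 2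
      ≤ (borelTransform ρ ((E : ℂ) + (t : ℂ) * Complex.I)).im := by
  set z : ℂ := (E : ℂ) + (t : ℂ) * Complex.I with hz
  have hzim : z.im = t := by simp [hz]
  have hzim' : z.im ≠ 0 := by rw [hzim]; exact ht.ne'
  set h : ℝ → ℝ := fun x => ‖((x : ℂ) - z)⁻¹‖ with hh
  have hcont : Continuous h := (cont_inv_sub z hzim').norm
  have hbd : ∀ x, ‖h x‖ ≤ |z.im|⁻¹ := fun x => by
    rw [Real.norm_eq_abs, _root_.abs_of_nonneg (norm_nonneg _)]
    exact norm_inv_sub_le z hzim' x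
  have hmem : MemLp h (ENNReal.ofReal 2) ρ :=
    MemLp.of_bound hcont.aestronglyMeasurable _ (Filter.Eventually.of_forall hbd)
  have hmem1 : MemLp (fun _ : ℝ => (1:ℝ)) (ENNReal.ofReal 2) ρ := memLp_const 1
  have hconj : Real.HolderConjugate 2 2 := Real.HolderConjugate.two_two
  have hCS := integral_mul_le_Lp_mul_Lq_of_nonneg hconj
    (Filter.Eventually.of_forall fun x => norm_nonneg _ : 0 ≤ᵐ[ρ] h)
    (Filter.Eventually.of_forall fun _ => zero_le_one) hmem hmem1
  simp only [mul_one, one_pow, integral_const, Measure.real, measure_univ, ENNReal.toReal_one, smul_eq_mul,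
    Real.one_rpow, one_mul] at hCS
  have hCS' : ∫ a, h a ∂ρ ≤ (∫ a, h a ^ 2 ∂ρ) ^ ((1:ℝ)/2) := by
    simpa only [Real.rpow_two] using hCS
  have hIm : (borelTransform ρ z).im = ∫ x : ℝ, t / ((x - E) ^ 2 + t ^ 2) ∂ρ :=
    borelTransform_im ρ E t ht
  have hsq : ∀ x : ℝ, h x ^ 2 = (1 / t) * (t / ((x - E) ^ 2 + t ^ 2)) := by
    intro x
    have hns : Complex.normSq ((x:ℂ) - z) = (x - E) ^ 2 + t ^ 2 := by
      rw [Complex.normSq_apply]; simp [hz, pow_two]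
    have hden : (0:ℝ) < (x - E) ^ 2 + t ^ 2 := by positivity
    calc h x ^ 2 = (Complex.normSq ((x:ℂ) - z))⁻¹ := by
          rw [hh]
          simp only [norm_inv, inv_pow, Complex.sq_norm]
      _ = (1 / t) * (t / ((x - E) ^ 2 + t ^ 2)) := by rw [hns]; field_simp
  have hsqint : ∫ x, h x ^ 2 ∂ρ = (1 / t) * (borelTransform ρ z).im := by
    rw [hIm, ← integral_const_mul]
    exact integral_congr_ae (Filter.Eventually.of_forall hsq)
  have habs : ‖borelTransform ρ z‖ ≤ ∫ x, h x ∂ρ := by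
    rw [borelTransform]
    exact norm_integral_le_integral_norm _
  have him_nonneg : 0 ≤ (borelTransform ρ z).im := by
    rw [hIm]
    apply integral_nonneg
    intro x; positivity
  have h2 : ‖borelTransform ρ z‖ ^ 2 ≤ ∫ x, h x ^ 2 ∂ρ := by
    calc ‖borelTransform ρ z‖ ^ 2 ≤ (∫ x, h x ∂ρ) ^ 2 := by
          apply pow_le_pow_left₀ (norm_nonneg _) habs
      _ ≤ ((∫ x, h x ^ 2 ∂ρ) ^ ((1:ℝ)/2)) ^ 2 := by
          apply pow_le_pow_left₀ (integral_nonneg fun x => norm_nonneg _) hCS'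
      _ = ∫ x, h x ^ 2 ∂ρ := by
          rw [← Real.rpow_natCast ((∫ x, h x ^ 2 ∂ρ) ^ ((1:ℝ)/2)) 2, ← Real.rpow_mul
            (integral_nonneg fun x => sq_nonneg _)]
          norm_num
  rw [hsqint] at h2
  calc t * ‖borelTransform ρ z‖ ^ 2 ≤ t * ((1/t) * (borelTransform ρ z).im) :=
        by apply mul_le_mul_of_nonneg_left h2 ht.le
    _ = (borelTransform ρ z).im := by field_simp

lemma key_upper (μ : Measure ℝ) [IsProbabilityMeasure μ] (α D : ℝ) (hα0 : 0 < α)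
    (hα1 : α ≤ 1) (hD : 0 ≤ D)
    (hmu : ∀ x ε : ℝ, 0 < ε → (μ (Set.Ioo (x - ε) (x + ε))).toReal ≤ D * (2 * ε) ^ α)
    (c u v : ℝ) (hc : c ≠ 0) (hv : 0 < v) :
    ∫ x : ℝ, v / ((c * x + u) ^ 2 + v ^ 2) ∂μ
      ≤ 2 ^ (α + 1) * D * |c| ^ (-α) * v ^ (α - 1) := by
  have hcpos : 0 < |c| := abs_pos.2 hc
  set g : ℝ → ℝ := fun x => v / ((c * x + u) ^ 2 + v ^ 2) with hg
  have hden : ∀ x : ℝ, (0:ℝ) < (c * x + u) ^ 2 + v ^ 2 := fun x =>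
    add_pos_of_nonneg_of_pos (sq_nonneg _) (by positivity)
  have hgnn : ∀ x, 0 ≤ g x := fun x => le_of_lt (by rw [hg]; positivity)
  have hgcont : Continuous g := by
    apply Continuous.div (by continuity) (by continuity)
    exact fun x => (hden x).ne'
  have hgle : ∀ x, g x ≤ 1 / v := by
    intro x
    rw [hg, div_le_div_iff₀ (hden x) hv]
    nlinarith [sq_nonneg (c * x + u)]
  set C : ℝ := D * 2 ^ α * |c| ^ (-α) * v ^ (α / 2) with hC
  have hCnn : 0 ≤ C := by
    apply mul_nonneg (mul_nonneg (mul_nonneg hD _) _) _ <;> positivity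
  set T : ℝ := 1 / v with hT
  have hTpos : 0 < T := by positivity
  -- step 1 : Bochner integral to lintegral
  have h1 : ∫ x : ℝ, g x ∂μ = (∫⁻ x, ENNReal.ofReal (g x) ∂μ).toReal := by
    rw [integral_eq_lintegral_of_nonneg_ae (Filter.Eventually.of_forall hgnn)
      hgcont.aestronglyMeasurable]
  -- step 2 : layercake
  have h2 : ∫⁻ x, ENNReal.ofReal (g x) ∂μ = ∫⁻ s in Set.Ioi (0:ℝ), μ {x | s < g x} := by
    exact lintegral_eq_lintegral_meas_lt μ (Filter.Eventually.of_forall hgnn)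
      hgcont.aemeasurable
  -- step 3 : pointwise bound on the distribution function
  have h3 : ∀ s ∈ Set.Ioi (0:ℝ), μ {x | s < g x}
      ≤ (Set.Ioo (0:ℝ) T).indicator (fun s => ENNReal.ofReal (C * s ^ (-(α/2)))) s := by
    intro s hs
    rw [Set.mem_Ioi] at hs
    by_cases hsT : s < T
    · rw [Set.indicator_of_mem (Set.mem_Ioo.2 ⟨hs, hsT⟩)]
      by_cases hR : 0 < v / s - v ^ 2
      · set r : ℝ := Real.sqrt (v / s - v ^ 2) / |c| with hr
        have hrpos : 0 < r := div_pos (Real.sqrt_pos.2 hR) hcpos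
        have hsub : {x : ℝ | s < g x} ⊆ Set.Ioo (-u/c - r) (-u/c + r) := by
          intro x hx
          rw [Set.mem_setOf_eq, hg] at hx
          have h4 : (c * x + u) ^ 2 + v ^ 2 < v / s := by
            have hx' := (lt_div_iff₀ (hden x)).1 hx
            rw [lt_div_iff₀ hs]
            nlinarith
          have h5 : (c * x + u) ^ 2 < v / s - v ^ 2 := by linarith
          have h6 : |c * x + u| < Real.sqrt (v / s - v ^ 2) := by
            rw [← Real.sqrt_sq_eq_abs]
            exact Real.sqrt_lt_sqrt (sq_nonneg _) h5
          have h7 : |x - (-u/c)| < r := by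
            rw [hr, lt_div_iff₀ hcpos]
            calc |x - (-u/c)| * |c| = |(x - (-u/c)) * c| := (abs_mul _ _).symm
              _ = |c * x + u| := by rw [show (x - (-u/c)) * c = c * x + u by field_simp; ring]
              _ < _ := h6
          rw [Set.mem_Ioo]
          rw [abs_lt] at h7
          constructor <;> linarith [h7.1, h7.2]
        calc μ {x : ℝ | s < g x} ≤ μ (Set.Ioo (-u/c - r) (-u/c + r)) := measure_mono hsub
          _ ≤ ENNReal.ofReal (C * s ^ (-(α/2))) := by
              rw [ENNReal.le_ofReal_iff_toReal_le (measure_ne_top μ _) (by positivity)]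
              calc (μ (Set.Ioo (-u/c - r) (-u/c + r))).toReal ≤ D * (2 * r) ^ α :=
                      hmu _ r hrpos
                  _ ≤ C * s ^ (-(α/2)) := by
                      have e1 : (2 * r) ^ α = 2 ^ α * (Real.sqrt (v/s - v^2)) ^ α * |c| ^ (-α) := by
                        rw [hr, ← mul_div_assoc, Real.div_rpow (by positivity) hcpos.le,
                          Real.mul_rpow (by norm_num) (Real.sqrt_nonneg _),
                          Real.rpow_neg hcpos.le, div_eq_mul_inv]
                      have e2 : (Real.sqrt (v/s - v^2)) ^ α ≤ v ^ (α/2) * s ^ (-(α/2)) := by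
                        have hvs : (0:ℝ) < v / s := by positivity
                        have l1 : Real.sqrt (v/s - v^2) ≤ Real.sqrt (v/s) :=
                          Real.sqrt_le_sqrt (by nlinarith [sq_nonneg v])
                        calc (Real.sqrt (v/s - v^2)) ^ α ≤ (Real.sqrt (v/s)) ^ α :=
                              Real.rpow_le_rpow (Real.sqrt_nonneg _) l1 hα0.le
                          _ = (v/s) ^ (α/2) := by
                              rw [Real.sqrt_eq_rpow, ← Real.rpow_mul hvs.le]
                              congr 1
                              ring
                          _ = v ^ (α/2) * s ^ (-(α/2)) := by
                              rw [Real.div_rpow hv.le hs.le, Real.rpow_neg hs.le,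
                                div_eq_mul_inv]
                      calc D * (2 * r) ^ α = D * (2 ^ α * (Real.sqrt (v/s - v^2)) ^ α * |c| ^ (-α)) := by
                            rw [e1]
                        _ ≤ D * (2 ^ α * (v ^ (α/2) * s ^ (-(α/2))) * |c| ^ (-α)) := by
                            apply mul_le_mul_of_nonneg_left _ hD
                            apply mul_le_mul_of_nonneg_right _ (by positivity)
                            exact mul_le_mul_of_nonneg_left e2 (by positivity)
                        _ = C * s ^ (-(α/2)) := by rw [hC]; ring
      · have : {x : ℝ | s < g x} = ∅ := by
          ext x
          simp only [Set.mem_setOf_eq, Set.mem_empty_iff_false, iff_false, not_lt]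
          rw [hg]
          rw [div_le_iff₀ (hden x)]
          push_neg at hR
          have h4 : v / s ≤ v ^ 2 := by linarith
          rw [div_le_iff₀ hs] at h4
          nlinarith [sq_nonneg (c * x + u), hs]
        rw [this]
        simp
    · have : {x : ℝ | s < g x} = ∅ := by
        ext x
        simp only [Set.mem_setOf_eq, Set.mem_empty_iff_false, iff_false, not_lt]
        exact le_trans (hgle x) (not_lt.1 hsT)
      rw [this, Set.indicator_apply]
      split <;> simp
  -- step 4 : integrate the bound
  have hintOn : IntegrableOn (fun s : ℝ => C * s ^ (-(α/2))) (Set.Ioo 0 T) := by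
    apply Integrable.const_mul
    exact (intervalIntegral.integrableOn_Ioo_rpow_iff hTpos).2 (by linarith)
  have h4 : ∫⁻ s in Set.Ioi (0:ℝ), μ {x | s < g x}
      ≤ ENNReal.ofReal (∫ s in Set.Ioo (0:ℝ) T, C * s ^ (-(α/2))) := by
    calc ∫⁻ s in Set.Ioi (0:ℝ), μ {x | s < g x}
        ≤ ∫⁻ s in Set.Ioi (0:ℝ),
            (Set.Ioo (0:ℝ) T).indicator (fun s => ENNReal.ofReal (C * s ^ (-(α/2)))) s :=
          lintegral_mono_ae ((ae_restrict_iff' measurableSet_Ioi).2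
            (Filter.Eventually.of_forall h3))
      _ = ∫⁻ s in Set.Ioo (0:ℝ) T, ENNReal.ofReal (C * s ^ (-(α/2)))
            ∂(volume.restrict (Set.Ioi (0:ℝ))) := lintegral_indicator measurableSet_Ioo _
      _ = ∫⁻ s in Set.Ioo (0:ℝ) T, ENNReal.ofReal (C * s ^ (-(α/2))) := by
          rw [Measure.restrict_restrict measurableSet_Ioo]
          congr 1
          rw [Set.inter_eq_left.2 (fun y hy => hy.1)]
      _ = ENNReal.ofReal (∫ s in Set.Ioo (0:ℝ) T, C * s ^ (-(α/2))) := by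
          rw [ofReal_integral_eq_lintegral_ofReal hintOn
            ((ae_restrict_iff' measurableSet_Ioo).2 (Filter.Eventually.of_forall
              fun y hy => mul_nonneg hCnn (Real.rpow_nonneg (le_of_lt hy.1) _)))]
  -- step 5 : compute the integral
  have h5 : ∫ s in Set.Ioo (0:ℝ) T, C * s ^ (-(α/2)) = C * (T ^ (1 - α/2) / (1 - α/2)) := by
    rw [integral_const_mul]
    congr 1
    rw [← integral_Ioc_eq_integral_Ioo, ← intervalIntegral.integral_of_le hTpos.le]
    rw [integral_rpow (Or.inl (by linarith))]
    rw [Real.zero_rpow (by linarith : -(α/2) + 1 ≠ 0)]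
    rw [show -(α/2) + 1 = 1 - α/2 by ring]
    ring
  -- conclusion
  rw [h1, h2]
  calc (∫⁻ s in Set.Ioi (0:ℝ), μ {x | s < g x}).toReal
      ≤ C * (T ^ (1 - α/2) / (1 - α/2)) := by
        rw [← h5]
        refine ENNReal.toReal_le_of_le_ofReal ?_ h4
        rw [h5]
        have : 0 ≤ T ^ (1 - α/2) / (1 - α/2) := by
          apply div_nonneg (by positivity)
          linarith
        positivity
    _ ≤ 2 ^ (α + 1) * D * |c| ^ (-α) * v ^ (α - 1) := by
        have hTv : T ^ (1 - α/2) = v ^ (α/2 - 1) := by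
          rw [hT, one_div, Real.inv_rpow hv.le, ← Real.rpow_neg hv.le]
          congr 1
          ring
        rw [hTv, hC]
        have hvv : v ^ (α/2) * v ^ (α/2 - 1) = v ^ (α - 1) := by
          rw [← Real.rpow_add hv]
          congr 1
          ring
        have hfrac : 1 / (1 - α/2) ≤ 2 := by
          rw [div_le_iff₀ (by linarith)]
          linarith
        have h2a : (2:ℝ) ^ α * 2 = 2 ^ (α + 1) := by
          rw [Real.rpow_add two_pos, Real.rpow_one]
        calc D * 2 ^ α * |c| ^ (-α) * v ^ (α/2) * (v ^ (α/2 - 1) / (1 - α/2))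
            = (D * 2 ^ α * |c| ^ (-α) * (v ^ (α/2) * v ^ (α/2 - 1))) * (1 / (1 - α/2)) := by
              ring
          _ ≤ (D * 2 ^ α * |c| ^ (-α) * (v ^ (α/2) * v ^ (α/2 - 1))) * 2 := by
              apply mul_le_mul_of_nonneg_left hfrac
              positivity
          _ = 2 ^ (α + 1) * D * |c| ^ (-α) * v ^ (α - 1) := by
              rw [hvv, ← h2a]
              ring

lemma dAlpha_le_of_bound (ρ : Measure ℝ) [IsFiniteMeasure ρ] (α : ℝ) (M : ℝ) (hM : 0 ≤ M)
    (h : ∀ E ε : ℝ, 0 < ε → (ρ (Set.Ioo (E - ε) (E + ε))).toReal ≤ M * (2 * ε) ^ α) :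
    dAlpha ρ α ≤ ENNReal.ofReal M := by
  rw [dAlpha]
  refine iSup_le fun E => iSup_le fun ε => iSup_le fun hε => ?_
  apply ENNReal.div_le_of_le_mul
  rw [← ENNReal.ofReal_mul hM]
  rw [ENNReal.le_ofReal_iff_toReal_le (measure_ne_top ρ _) (by positivity)]
  exact h E ε hε

lemma measure_Ioo_le_of_dAlpha (ρ : Measure ℝ) [IsFiniteMeasure ρ] (α : ℝ)
    (hρ : dAlpha ρ α ≠ ⊤) (E ε : ℝ) (hε : 0 < ε) :
    (ρ (Set.Ioo (E - ε) (E + ε))).toReal ≤ (dAlpha ρ α).toReal * (2 * ε) ^ α := by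
  have h1 : ρ (Set.Ioo (E - ε) (E + ε)) / ENNReal.ofReal ((2 * ε) ^ α) ≤ dAlpha ρ α := by
    rw [dAlpha]
    refine le_iSup_of_le E (le_iSup_of_le ε ?_)
    exact le_iSup (fun _ : 0 < ε => ρ (Set.Ioo (E - ε) (E + ε)) / ENNReal.ofReal ((2 * ε) ^ α)) hε
  have hq0 : ENNReal.ofReal ((2 * ε) ^ α) ≠ 0 := by
    simp only [ne_eq, ENNReal.ofReal_eq_zero, not_le]
    positivity
  have h2 : ρ (Set.Ioo (E - ε) (E + ε)) ≤ dAlpha ρ α * ENNReal.ofReal ((2 * ε) ^ α) :=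
    (ENNReal.div_le_iff_le_mul (Or.inl hq0) (Or.inl ENNReal.ofReal_ne_top)).1 h1
  calc (ρ (Set.Ioo (E - ε) (E + ε))).toReal
      ≤ (dAlpha ρ α * ENNReal.ofReal ((2 * ε) ^ α)).toReal :=
        ENNReal.toReal_mono (ENNReal.mul_ne_top hρ ENNReal.ofReal_ne_top) h2
    _ = (dAlpha ρ α).toReal * (2 * ε) ^ α := by
        rw [ENNReal.toReal_mul, ENNReal.toReal_ofReal (by positivity)]

lemma nu_bound (α : ℝ) (hα0 : 0 < α) (hα1 : α ≤ 1)
    (μ : Measure ℝ) [IsProbabilityMeasure μ] (D : ℝ) (hD : 0 ≤ D)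
    (hmu : ∀ x ε : ℝ, 0 < ε → (μ (Set.Ioo (x - ε) (x + ε))).toReal ≤ D * (2 * ε) ^ α)
    (c : ℝ) (hc : c ≠ 0)
    (σn : Measure ℝ) [IsProbabilityMeasure σn] (νn : Measure ℝ) [IsProbabilityMeasure νn]
    (hn : ∀ E t : ℝ, 0 < t →
      (borelTransform νn ((E : ℂ) + (t : ℂ) * Complex.I)).im =
        (∫ x : ℝ, ((c : ℂ) * (x : ℂ) +
          (borelTransform σn ((E : ℂ) + (t : ℂ) * Complex.I))⁻¹)⁻¹ ∂μ).im)
    (E ε : ℝ) (hε : 0 < ε) :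
    (νn (Set.Ioo (E - ε) (E + ε))).toReal ≤ (4 * D * |c| ^ (-α)) * (2 * ε) ^ α := by
  set z : ℂ := (E : ℂ) + (ε : ℂ) * Complex.I with hz
  set F : ℂ := borelTransform σn z with hF
  -- positivity of Im F
  have hFim : 0 < F.im := by
    rw [hF, borelTransform_im σn E ε hε]
    have hint : Integrable (fun x : ℝ => ε / ((x - E) ^ 2 + ε ^ 2)) σn := by
      have := integrable_kernel σn ε 1 (-E) ε hε
      simpa [sub_eq_add_neg] using this
    rw [integral_pos_iff_support_of_nonneg (fun x => by positivity) hint]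
    have : (Function.support fun x : ℝ => ε / ((x - E) ^ 2 + ε ^ 2)) = Set.univ := by
      ext x
      simp only [Function.mem_support, Set.mem_univ, iff_true]
      positivity
    rw [this]
    simp
  have hF0 : F ≠ 0 := fun h => by simp [h] at hFim
  set w : ℂ := F⁻¹ with hw
  have hwim : w.im = -F.im / Complex.normSq F := Complex.inv_im F
  have hns : 0 < Complex.normSq F := Complex.normSq_pos.2 hF0
  set v : ℝ := -w.im with hv
  have hvpos : 0 < v := by
    rw [hv, hwim]
    rw [neg_div, neg_neg]
    positivity
  have hwim' : w.im ≠ 0 := by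
    intro h
    rw [hv, h] at hvpos
    simp at hvpos
  -- v ≥ ε
  have hεv : ε ≤ v := by
    have h1 := sq_abs_borel_le σn E ε hε
    rw [← hz, ← hF] at h1
    have h2 : ‖F‖ ^ 2 = Complex.normSq F := Complex.sq_norm F
    rw [h2] at h1
    rw [hv, hwim, neg_div, neg_neg, le_div_iff₀ hns]
    exact h1
  -- the imaginary part identity
  have him : (borelTransform νn z).im = ∫ x : ℝ, v / ((c * x + w.re) ^ 2 + v ^ 2) ∂μ := by
    rw [hz, hn E ε hε, ← hz, ← hF, ← hw, im_integral_inv_affine μ c w hwim']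
    congr 1 with x
    rw [hv, neg_sq]
  -- lower bound by the measure of the interval
  have hlow : (νn (Set.Ioo (E - ε) (E + ε))).toReal / (2 * ε) ≤ (borelTransform νn z).im := by
    rw [hz, borelTransform_im νn E ε hε]
    exact poisson_lower νn E ε hε
  -- upper bound via key_upper
  have hup : ∫ x : ℝ, v / ((c * x + w.re) ^ 2 + v ^ 2) ∂μ
      ≤ 2 ^ (α + 1) * D * |c| ^ (-α) * ε ^ (α - 1) := by
    calc ∫ x : ℝ, v / ((c * x + w.re) ^ 2 + v ^ 2) ∂μ
        ≤ 2 ^ (α + 1) * D * |c| ^ (-α) * v ^ (α - 1) :=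
          key_upper μ α D hα0 hα1 hD hmu c w.re v hc hvpos
      _ ≤ 2 ^ (α + 1) * D * |c| ^ (-α) * ε ^ (α - 1) := by
          apply mul_le_mul_of_nonneg_left _ (by positivity)
          exact Real.rpow_le_rpow_of_nonpos hε hεv (by linarith)
  -- combine
  have hcomb : (νn (Set.Ioo (E - ε) (E + ε))).toReal
      ≤ 2 * ε * (2 ^ (α + 1) * D * |c| ^ (-α) * ε ^ (α - 1)) := by
    have h6 : (νn (Set.Ioo (E - ε) (E + ε))).toReal / (2 * ε)
        ≤ 2 ^ (α + 1) * D * |c| ^ (-α) * ε ^ (α - 1) :=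
      le_trans hlow (by rw [him]; exact hup)
    rw [div_le_iff₀ (by positivity : (0:ℝ) < 2 * ε)] at h6
    calc (νn (Set.Ioo (E - ε) (E + ε))).toReal
        ≤ 2 ^ (α + 1) * D * |c| ^ (-α) * ε ^ (α - 1) * (2 * ε) := h6
      _ = 2 * ε * (2 ^ (α + 1) * D * |c| ^ (-α) * ε ^ (α - 1)) := by ring
  calc (νn (Set.Ioo (E - ε) (E + ε))).toReal
      ≤ 2 * ε * (2 ^ (α + 1) * D * |c| ^ (-α) * ε ^ (α - 1)) := hcomb
    _ = (4 * D * |c| ^ (-α)) * (2 * ε) ^ α := by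
        have e1 : ε * ε ^ (α - 1) = ε ^ α := by
          nth_rewrite 1 [← Real.rpow_one ε]
          rw [← Real.rpow_add hε]
          congr 1; ring
        have e2 : (2 * ε) ^ α = 2 ^ α * ε ^ α := Real.mul_rpow (by norm_num) hε.le
        have e3 : (2:ℝ) ^ (α + 1) = 2 ^ α * 2 := by
          rw [Real.rpow_add two_pos, Real.rpow_one]
        calc 2 * ε * (2 ^ (α + 1) * D * |c| ^ (-α) * ε ^ (α - 1))
            = 2 * 2 ^ (α+1) * D * |c| ^ (-α) * (ε * ε ^ (α - 1)) := by ring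
          _ = 2 * (2 ^ α * 2) * D * |c| ^ (-α) * ε ^ α := by rw [e1, e3]
          _ = (4 * D * |c| ^ (-α)) * (2 ^ α * ε ^ α) := by ring
          _ = (4 * D * |c| ^ (-α)) * (2 * ε) ^ α := by rw [e2]

lemma div_le_dAlpha (ρ : Measure ℝ) (α : ℝ) (E ε : ℝ) (hε : 0 < ε) :
    ρ (Set.Ioo (E - ε) (E + ε)) / ENNReal.ofReal ((2 * ε) ^ α) ≤ dAlpha ρ α := by
  rw [dAlpha]
  refine le_iSup_of_le E (le_iSup_of_le ε ?_)
  exact le_iSup (fun _ : 0 < ε => ρ (Set.Ioo (E - ε) (E + ε)) / ENNReal.ofReal ((2 * ε) ^ α)) hε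

theorem stmt17 (α : ℝ) (hα0 : 0 < α) (hα1 : α ≤ 1)
    (μ : Measure ℝ) [IsProbabilityMeasure μ] (hμ : dAlpha μ α ≠ ⊤)
    (a : ℕ → ℝ) (ha : ∀ n, a n ≠ 0)
    (σ : ℕ → Measure ℝ) [∀ n, IsProbabilityMeasure (σ n)]
    (ν : ℕ → Measure ℝ) [∀ n, IsProbabilityMeasure (ν n)]
    (hν : ∀ (n : ℕ) (E : ℝ) (t : ℝ), 0 < t →
      (borelTransform (ν n) ((E : ℂ) + (t : ℂ) * Complex.I)).im =
        (∫ x : ℝ,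
          ((a n : ℂ) * (x : ℂ) +
            (borelTransform (σ n) ((E : ℂ) + (t : ℂ) * Complex.I))⁻¹)⁻¹ ∂μ).im) :
    (∀ n, dAlpha (ν n) α ≠ ⊤ ∧
      dAlpha (ν n) α ≤
        ENNReal.ofReal (2 ^ (2 - α) * Real.pi * |a n| ^ (-α)) * dAlpha μ α) ∧
    ∀ β : ℕ → ℝ, (∀ n, 0 < β n) → (∑' n, β n) = 1 →
      Summable (fun n => β n * |a n| ^ (-α)) →
      dAlpha (Measure.sum (fun n => ENNReal.ofReal (β n) • ν n)) α ≠ ⊤ ∧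
      dAlpha (Measure.sum (fun n => ENNReal.ofReal (β n) • ν n)) α ≤
        ENNReal.ofReal (2 ^ (2 - α) * Real.pi) * dAlpha μ α *
          ENNReal.ofReal (∑' n, β n * |a n| ^ (-α)) := by
  set D : ℝ := (dAlpha μ α).toReal with hDdef
  have hD0 : 0 ≤ D := ENNReal.toReal_nonneg
  have hDof : dAlpha μ α = ENNReal.ofReal D := (ENNReal.ofReal_toReal hμ).symm
  have hmu' : ∀ x ε : ℝ, 0 < ε → (μ (Set.Ioo (x - ε) (x + ε))).toReal ≤ D * (2 * ε) ^ α :=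
    measure_Ioo_le_of_dAlpha μ α hμ
  have key : ∀ n, dAlpha (ν n) α ≤ ENNReal.ofReal (4 * D * |a n| ^ (-α)) := fun n =>
    dAlpha_le_of_bound (ν n) α _
      (by have := abs_pos.2 (ha n); positivity)
      (fun E ε hε => nu_bound α hα0 hα1 μ D hD0 hmu' (a n) (ha n) (σ n) (ν n) (hν n) E ε hε)
  have hconst : (4:ℝ) ≤ 2 ^ (2 - α) * Real.pi := by
    have h1 : (2:ℝ) ≤ 2 ^ (2 - α) := by
      calc (2:ℝ) = 2 ^ (1:ℝ) := (Real.rpow_one 2).symm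
        _ ≤ 2 ^ (2 - α) := Real.rpow_le_rpow_of_exponent_le one_le_two (by linarith)
    nlinarith [Real.pi_gt_three]
  have key2 : ∀ n, dAlpha (ν n) α
      ≤ ENNReal.ofReal (2 ^ (2 - α) * Real.pi * |a n| ^ (-α) * D) := by
    intro n
    refine le_trans (key n) (ENNReal.ofReal_le_ofReal ?_)
    have hP : (0:ℝ) ≤ |a n| ^ (-α) := by positivity
    nlinarith [mul_nonneg (mul_nonneg (sub_nonneg.2 hconst) hD0) hP]
  constructor
  · intro n
    refine ⟨ne_top_of_le_ne_top ENNReal.ofReal_ne_top (key n), ?_⟩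
    rw [hDof, ← ENNReal.ofReal_mul (by positivity)]
    exact key2 n
  · intro β hβ hβ1 hsum
    set S : ℝ := ∑' n, β n * |a n| ^ (-α) with hS
    have hS0 : 0 ≤ S := tsum_nonneg (fun n => mul_nonneg (hβ n).le (by positivity))
    have hsum' : Summable (fun n => β n * (2 ^ (2 - α) * Real.pi * |a n| ^ (-α) * D)) :=
      (hsum.mul_left (2 ^ (2 - α) * Real.pi * D)).congr (fun n => by ring)
    have main : dAlpha (Measure.sum (fun n => ENNReal.ofReal (β n) • ν n)) α
        ≤ ENNReal.ofReal (2 ^ (2 - α) * Real.pi * D * S) := by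
      have step1 : dAlpha (Measure.sum (fun n => ENNReal.ofReal (β n) • ν n)) α
          ≤ ∑' n, ENNReal.ofReal (β n) * dAlpha (ν n) α := by
        rw [dAlpha]
        refine iSup_le fun E => iSup_le fun ε => iSup_le fun hε => ?_
        have happ : (Measure.sum (fun n => ENNReal.ofReal (β n) • ν n))
            (Set.Ioo (E - ε) (E + ε))
            = ∑' n, ENNReal.ofReal (β n) * (ν n) (Set.Ioo (E - ε) (E + ε)) := by
          rw [Measure.sum_apply _ measurableSet_Ioo]
          simp [Measure.smul_apply, smul_eq_mul]
        rw [happ, div_eq_mul_inv, ← ENNReal.tsum_mul_right]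
        refine ENNReal.tsum_le_tsum fun n => ?_
        rw [mul_assoc]
        apply mul_le_mul_right
        rw [← div_eq_mul_inv]
        exact div_le_dAlpha (ν n) α E ε hε
      calc dAlpha (Measure.sum (fun n => ENNReal.ofReal (β n) • ν n)) α
          ≤ ∑' n, ENNReal.ofReal (β n) * dAlpha (ν n) α := step1
        _ ≤ ∑' n, ENNReal.ofReal (β n)
              * ENNReal.ofReal (2 ^ (2 - α) * Real.pi * |a n| ^ (-α) * D) :=
            ENNReal.tsum_le_tsum fun n => mul_le_mul_right (key2 n) _
        _ = ∑' n, ENNReal.ofReal (β n * (2 ^ (2 - α) * Real.pi * |a n| ^ (-α) * D)) := by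
            congr with n
            rw [ENNReal.ofReal_mul (le_of_lt (hβ n))]
        _ = ENNReal.ofReal (∑' n, β n * (2 ^ (2 - α) * Real.pi * |a n| ^ (-α) * D)) :=
            (ENNReal.ofReal_tsum_of_nonneg (fun n => mul_nonneg (hβ n).le (by positivity)) hsum').symm
        _ ≤ ENNReal.ofReal (2 ^ (2 - α) * Real.pi * D * S) := by
            apply le_of_eq
            congr 1
            have e : (fun n => β n * (2 ^ (2 - α) * Real.pi * |a n| ^ (-α) * D))
                = fun n => (2 ^ (2 - α) * Real.pi * D) * (β n * |a n| ^ (-α)) :=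
              funext fun n => by ring
            rw [e, tsum_mul_left, hS.symm]
    refine ⟨ne_top_of_le_ne_top ENNReal.ofReal_ne_top main, ?_⟩
    rw [hDof, ← ENNReal.ofReal_mul (by positivity), ← ENNReal.ofReal_mul (by positivity)]
    exact le_trans main (ENNReal.ofReal_le_ofReal (le_of_eq (by ring)))
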